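/- Let S be a numerical semigroup with multiplicity m, conductor c, depth q = ⌈c/m⌉, offset ρ = qm−c, left part L = S ∩ [0,c), and Apéry pieces A_i = (S \ (m+S)) ∩ [im−ρ,(i+1)m−ρ) with α_i = |A_i|. Then |L| = Σ_{i=0}^{q−1} (q−i)·α_i. -/
import Mathlib

theorem stmt13 (S : Set ℕ)
    (h0 : 0 ∈ S)
    (hadd : ∀ a ∈ S, ∀ b ∈ S, a + b ∈ S)
    (hfin : (Sᶜ : Set ℕ).Finite)
    (m : ℕ) (hm : m ∈ S ∧ m ≠ 0 ∧ ∀ x ∈ S, x ≠ 0 → m ≤ x)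
    (c : ℕ) (hc : (∀ x, c ≤ x → x ∈ S) ∧ ∀ c', (∀ x, c' ≤ x → x ∈ S) → c ≤ c')
    (q ρ : ℕ) (hq : q = (c + m - 1) / m) (hρ : ρ = q * m - c)
    (L : Set ℕ) (hL : L = {x ∈ S | x < c})
    (A : Set ℕ) (hA : A = {x ∈ S | ¬ ∃ s ∈ S, x = m + s})
    (Ai : ℕ → Set ℕ)
    (hAi : ∀ i, Ai i = {x ∈ A | i * m ≤ x + ρ ∧ x + ρ < (i + 1) * m}) :
    L.ncard = ∑ i ∈ Finset.range q, (q - i) * (Ai i).ncard := by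
  classical
  obtain ⟨hmS, hm0, hmin⟩ := hm
  obtain ⟨hc1, _⟩ := hc
  have hmpos : 0 < m := Nat.pos_of_ne_zero hm0
  -- q * m = c + ρ
  have hcle : c ≤ q * m := by
    have h1 : m * ((c + m - 1) / m) + (c + m - 1) % m = c + m - 1 := Nat.div_add_mod _ m
    have h2 : (c + m - 1) % m < m := Nat.mod_lt _ hmpos
    rw [hq, Nat.mul_comm]
    omega
  have hqm : q * m = c + ρ := by omega
  -- S is closed under adding multiples of m
  have hstep : ∀ a ∈ S, ∀ k : ℕ, a + k * m ∈ S := by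
    intro a ha k
    induction k with
    | zero => simpa using ha
    | succ n ih =>
      have h : a + (n + 1) * m = (a + n * m) + m := by ring
      rw [h]; exact hadd _ ih _ hmS
  have hAsub : A ⊆ S := by rw [hA]; intro x hx; exact hx.1
  -- Apéry decomposition: existence
  have hdecomp : ∀ x, x ∈ S → ∃ a k, a ∈ A ∧ x = a + k * m := by
    intro x
    induction x using Nat.strong_induction_on with
    | _ x ih =>
      intro hx
      by_cases hxA : x ∈ A
      · exact ⟨x, 0, hxA, by simp⟩
      · rw [hA] at hxA
        simp only [Set.mem_setOf_eq, not_and, not_not] at hxA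
        obtain ⟨s, hs, hxs⟩ := hxA hx
        have hslt : s < x := by omega
        obtain ⟨a, k, haA, hak⟩ := ih s hslt hs
        exact ⟨a, k + 1, haA, by rw [hxs, hak]; ring⟩
  -- Apéry decomposition: uniqueness
  have huniq : ∀ a ∈ A, ∀ a' ∈ A, ∀ k k' : ℕ,
      a + k * m = a' + k' * m → a = a' ∧ k = k' := by
    have aux : ∀ a ∈ A, ∀ a' ∈ A, ∀ k k' : ℕ, k ≤ k' →
        a + k * m = a' + k' * m → k = k' := by
      intro a haA a' ha'A k k' hkk' heq
      by_contra hne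
      have hklt : k < k' := lt_of_le_of_ne hkk' hne
      have ha'S : a' ∈ S := hAsub ha'A
      have hmem : a' + (k' - k - 1) * m ∈ S := hstep _ ha'S _
      have heq2 : a = m + (a' + (k' - k - 1) * m) := by
        have h3 : k' = k + (k' - k - 1) + 1 := by omega
        rw [h3] at heq
        have : a + k * m = a' + (k * m + ((k' - k - 1) * m + m)) := by
          rw [heq]; ring
        omega
      rw [hA] at haA
      exact haA.2 ⟨_, hmem, heq2⟩
    intro a haA a' ha'A k k' heq
    have hk : k = k' := by
      rcases Nat.le_total k k' with h | h
      · exact aux a haA a' ha'A k k' h heq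
      · exact (aux a' ha'A a haA k' k h heq.symm).symm
    subst hk
    exact ⟨by omega, rfl⟩
  -- interval index is determined
  have hidx : ∀ i i' a, a ∈ Ai i → a ∈ Ai i' → i = i' := by
    intro i i' a h1 h2
    rw [hAi] at h1 h2
    have l1 : i < i' + 1 := by
      exact Nat.lt_of_mul_lt_mul_right (lt_of_le_of_lt h1.2.1 h2.2.2)
    have l2 : i' < i + 1 := by
      exact Nat.lt_of_mul_lt_mul_right (lt_of_le_of_lt h2.2.1 h1.2.2)
    omega
  have hAiA : ∀ i, Ai i ⊆ A := by
    intro i; rw [hAi]; intro x hx; exact hx.1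
  -- membership characterization of L
  have hmem : ∀ x, x ∈ L ↔ ∃ i k a, i < q ∧ k < q - i ∧ a ∈ Ai i ∧ x = a + k * m := by
    intro x
    constructor
    · intro hx
      rw [hL] at hx
      obtain ⟨hxS, hxc⟩ := hx
      obtain ⟨a, k, haA, hak⟩ := hdecomp x hxS
      set i := (a + ρ) / m with hi
      have hd1 : i * m ≤ a + ρ := by rw [hi, Nat.mul_comm]; exact Nat.mul_div_le _ _
      have hd2 : a + ρ < (i + 1) * m := by
        have h1 : m * i + (a + ρ) % m = a + ρ := Nat.div_add_mod _ m
        have h2 : (a + ρ) % m < m := Nat.mod_lt _ hmpos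
        have : (i + 1) * m = m * i + m := by ring
        omega
      have haAi : a ∈ Ai i := by rw [hAi]; exact ⟨haA, hd1, hd2⟩
      have hik : i + k < q := by
        have h1 : (i + k) * m < q * m := by
          have : (i + k) * m = i * m + k * m := by ring
          omega
        exact Nat.lt_of_mul_lt_mul_right h1
      exact ⟨i, k, a, by omega, by omega, haAi, hak⟩
    · rintro ⟨i, k, a, hiq, hkq, haAi, rfl⟩
      rw [hL]
      have haA := hAiA i haAi
      refine ⟨hstep _ (hAsub haA) _, ?_⟩
      rw [hAi] at haAi
      simp only [Set.mem_setOf_eq] at haAi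
      obtain ⟨-, h3, h4⟩ := haAi
      have h1 : (i + 1 + k) * m ≤ q * m := Nat.mul_le_mul_right m (by omega)
      have h2 : (i + 1 + k) * m = (i + 1) * m + k * m := by ring
      omega
  -- finiteness
  have hLfin : L.Finite := (Set.finite_Iio c).subset (by rw [hL]; intro x hx; exact hx.2)
  have hAifin : ∀ i, (Ai i).Finite := by
    intro i
    refine (Set.finite_Iio ((i + 1) * m)).subset ?_
    intro x hx
    rw [hAi] at hx
    exact lt_of_le_of_lt (Nat.le_add_right x ρ) hx.2.2
  rw [Set.ncard_eq_toFinset_card L hLfin]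
  have hsum : ∀ i, (Ai i).ncard = ((hAifin i).toFinset).card := fun i =>
    Set.ncard_eq_toFinset_card _ _
  simp only [hsum]
  -- bijection with sigma finset
  have hbij : ((Finset.range q).sigma
      (fun i => (Finset.range (q - i)) ×ˢ (hAifin i).toFinset)).card
      = hLfin.toFinset.card := by
    refine Finset.card_bij (fun p _ => p.2.2 + p.2.1 * m) ?_ ?_ ?_
    · rintro ⟨i, k, a⟩ hp
      simp only [Finset.mem_sigma, Finset.mem_product, Finset.mem_range,
        Set.Finite.mem_toFinset] at hp ⊢
      exact (hmem _).2 ⟨i, k, a, hp.1, hp.2.1, hp.2.2, rfl⟩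
    · rintro ⟨i, k, a⟩ hp ⟨i', k', a'⟩ hp' heq
      simp only [Finset.mem_sigma, Finset.mem_product, Finset.mem_range,
        Set.Finite.mem_toFinset] at hp hp'
      have h1 := huniq a (hAiA i hp.2.2) a' (hAiA i' hp'.2.2) k k' heq
      obtain ⟨rfl, rfl⟩ := h1
      have : i = i' := hidx i i' a hp.2.2 hp'.2.2
      subst this
      rfl
    · intro b hb
      rw [Set.Finite.mem_toFinset] at hb
      obtain ⟨i, k, a, hiq, hkq, haAi, rfl⟩ := (hmem b).1 hb
      refine ⟨⟨i, k, a⟩, ?_, rfl⟩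
      simp only [Finset.mem_sigma, Finset.mem_product, Finset.mem_range,
        Set.Finite.mem_toFinset]
      exact ⟨hiq, hkq, haAi⟩
  rw [← hbij, Finset.card_sigma]
  refine Finset.sum_congr rfl ?_
  intro i _
  rw [Finset.card_product, Finset.card_range]
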